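/- One has lim_{t→1+} ξ(t) = 2/3 and lim_{t→1+} ξ'(t) = 8/135, where ξ' is the derivative of ξ on (1,∞). (Thus the holomorphic extension of ξ to a neighbourhood of 1 satisfies ξ(1) = 2/3 and ξ'(1) = 8/135.) -/

import Mathlib

open MeasureTheory Filter Set Real Topology

noncomputable section XiAuxSection

noncomputable def XiF (s : ℝ) : ℝ := Real.exp (-s) + s

lemma XiF_hasDerivAt (s : ℝ) : HasDerivAt XiF (1 - Real.exp (-s)) s := by
  unfold XiF
  have h : HasDerivAt (fun s : ℝ => Real.exp (-s)) (-Real.exp (-s)) s := by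
    simpa [Function.comp_def] using (Real.hasDerivAt_exp (-s)).comp s (hasDerivAt_neg s)
  simpa [XiF, sub_eq_add_neg, add_comm, Pi.add_def] using h.add (hasDerivAt_id s)

lemma XiF_continuous : Continuous XiF := by
  unfold XiF; continuity

lemma XiF_strictMonoOn : StrictMonoOn XiF (Ici 0) := by
  apply strictMonoOn_of_deriv_pos (convex_Ici 0) XiF_continuous.continuousOn
  intro s hs
  rw [interior_Ici] at hs
  rw [(XiF_hasDerivAt s).deriv]
  have : Real.exp (-s) < 1 := by
    rw [Real.exp_lt_one_iff]; linarith [mem_Ioi.mp hs]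
  linarith

lemma XiF_strictAntiOn : StrictAntiOn XiF (Iic 0) := by
  apply strictAntiOn_of_deriv_neg (convex_Iic 0) XiF_continuous.continuousOn
  intro s hs
  rw [interior_Iic] at hs
  rw [(XiF_hasDerivAt s).deriv]
  have : 1 < Real.exp (-s) := by
    rw [Real.one_lt_exp_iff]; linarith [mem_Iio.mp hs]
  linarith

def XserL (x : ℝ) : ℝ := x^2/2 + x^3/3 + x^4/4 + x^5/5 + x^6/6
def XserR (y : ℝ) : ℝ := y^2/2 - y^3/3 + y^4/4 - y^5/5 + y^6/6
def XPl (x : ℝ) : ℝ := x + 2/3*x^2 + 4/9*x^3 + 44/135*x^4 - x^5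
def XQu (x : ℝ) : ℝ := x + 2/3*x^2 + 4/9*x^3 + 44/135*x^4 + x^5
def XLL (x : ℝ) : ℝ := -x - Real.log (1-x)
def XRR (y : ℝ) : ℝ := y - Real.log (1+y)

lemma XLL_bound {x : ℝ} (h0 : 0 ≤ x) (h1 : x ≤ 1/2) : |XLL x - XserL x| ≤ 2*x^7 := by
  have hx : |x| < 1 := by rw [abs_of_nonneg h0]; linarith
  have h := Real.abs_log_sub_add_sum_range_le hx 6
  have hs : (∑ i ∈ Finset.range 6, x ^ (i + 1) / (i + 1)) = x + XserL x := by
    simp [Finset.sum_range_succ, XserL]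
    norm_num
    ring
  rw [hs] at h
  have habs : |XLL x - XserL x| = |x + XserL x + Real.log (1 - x)| := by
    unfold XLL
    rw [← abs_neg]
    ring_nf
  rw [habs]
  refine h.trans ?_
  rw [abs_of_nonneg h0]
  rw [div_le_iff₀ (by linarith)]
  norm_num
  nlinarith [mul_nonneg (pow_nonneg h0 7) (show (0:ℝ) ≤ 1 - 2*x by linarith)]

lemma XRR_bound {y : ℝ} (h0 : 0 ≤ y) (h1 : y ≤ 1/2) : |XRR y - XserR y| ≤ 2*y^7 := by
  have hx : |(-y)| < 1 := by rw [abs_neg, abs_of_nonneg h0]; linarith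
  have h := Real.abs_log_sub_add_sum_range_le hx 6
  have hs : (∑ i ∈ Finset.range 6, (-y) ^ (i + 1) / (i + 1)) = -y + XserR y := by
    simp [Finset.sum_range_succ, XserR]
    norm_num
    ring
  rw [hs] at h
  have h1y : (1 : ℝ) - -y = 1 + y := by ring
  rw [h1y] at h
  have habs : |XRR y - XserR y| = |-y + XserR y + Real.log (1 + y)| := by
    unfold XRR
    rw [← abs_neg]
    ring_nf
  rw [habs]
  refine h.trans ?_
  rw [abs_neg, abs_of_nonneg h0]
  rw [div_le_iff₀ (by linarith)]
  norm_num
  nlinarith [mul_nonneg (pow_nonneg h0 7) (show (0:ℝ) ≤ 1 - 2*y by linarith)]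


lemma xpow_step {x d : ℝ} (h0 : 0 ≤ x) (hd : x ≤ d) (i : ℕ) : x^(i+1) ≤ d * x^i := by
  rw [pow_succ, mul_comm (x^i) x]
  exact mul_le_mul_of_nonneg_right hd (pow_nonneg h0 i)

lemma keyQ {x : ℝ} (h0 : 0 ≤ x) (hd : x ≤ 1/20000) :
    XserL x + 2*x^7 ≤ XserR (XQu x) - 2*(XQu x)^7 := by
  unfold XserL XserR XQu
  have p6 := xpow_step h0 hd 6
  have p7 := xpow_step h0 hd 7
  have p8 := xpow_step h0 hd 8
  have p9 := xpow_step h0 hd 9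
  have p10 := xpow_step h0 hd 10
  have p11 := xpow_step h0 hd 11
  have p12 := xpow_step h0 hd 12
  have p13 := xpow_step h0 hd 13
  have p14 := xpow_step h0 hd 14
  have p15 := xpow_step h0 hd 15
  have p16 := xpow_step h0 hd 16
  have p17 := xpow_step h0 hd 17
  have p18 := xpow_step h0 hd 18
  have p19 := xpow_step h0 hd 19
  have p20 := xpow_step h0 hd 20
  have p21 := xpow_step h0 hd 21
  have p22 := xpow_step h0 hd 22
  have p23 := xpow_step h0 hd 23
  have p24 := xpow_step h0 hd 24
  have p25 := xpow_step h0 hd 25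
  have p26 := xpow_step h0 hd 26
  have p27 := xpow_step h0 hd 27
  have p28 := xpow_step h0 hd 28
  have p29 := xpow_step h0 hd 29
  have p30 := xpow_step h0 hd 30
  have p31 := xpow_step h0 hd 31
  have p32 := xpow_step h0 hd 32
  have p33 := xpow_step h0 hd 33
  have p34 := xpow_step h0 hd 34
  have n6 : (0:ℝ) ≤ x^6 := pow_nonneg h0 6
  have n7 : (0:ℝ) ≤ x^7 := pow_nonneg h0 7
  have n8 : (0:ℝ) ≤ x^8 := pow_nonneg h0 8
  have n9 : (0:ℝ) ≤ x^9 := pow_nonneg h0 9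
  have n10 : (0:ℝ) ≤ x^10 := pow_nonneg h0 10
  have n11 : (0:ℝ) ≤ x^11 := pow_nonneg h0 11
  have n12 : (0:ℝ) ≤ x^12 := pow_nonneg h0 12
  have n13 : (0:ℝ) ≤ x^13 := pow_nonneg h0 13
  have n14 : (0:ℝ) ≤ x^14 := pow_nonneg h0 14
  have n15 : (0:ℝ) ≤ x^15 := pow_nonneg h0 15
  have n16 : (0:ℝ) ≤ x^16 := pow_nonneg h0 16
  have n17 : (0:ℝ) ≤ x^17 := pow_nonneg h0 17
  have n18 : (0:ℝ) ≤ x^18 := pow_nonneg h0 18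
  have n19 : (0:ℝ) ≤ x^19 := pow_nonneg h0 19
  have n20 : (0:ℝ) ≤ x^20 := pow_nonneg h0 20
  have n21 : (0:ℝ) ≤ x^21 := pow_nonneg h0 21
  have n22 : (0:ℝ) ≤ x^22 := pow_nonneg h0 22
  have n23 : (0:ℝ) ≤ x^23 := pow_nonneg h0 23
  have n24 : (0:ℝ) ≤ x^24 := pow_nonneg h0 24
  have n25 : (0:ℝ) ≤ x^25 := pow_nonneg h0 25
  have n26 : (0:ℝ) ≤ x^26 := pow_nonneg h0 26
  have n27 : (0:ℝ) ≤ x^27 := pow_nonneg h0 27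
  have n28 : (0:ℝ) ≤ x^28 := pow_nonneg h0 28
  have n29 : (0:ℝ) ≤ x^29 := pow_nonneg h0 29
  have n30 : (0:ℝ) ≤ x^30 := pow_nonneg h0 30
  have n31 : (0:ℝ) ≤ x^31 := pow_nonneg h0 31
  have n32 : (0:ℝ) ≤ x^32 := pow_nonneg h0 32
  have n33 : (0:ℝ) ≤ x^33 := pow_nonneg h0 33
  have n34 : (0:ℝ) ≤ x^34 := pow_nonneg h0 34
  have n35 : (0:ℝ) ≤ x^35 := pow_nonneg h0 35
  norm_num at *
  linarith

lemma keyP {x : ℝ} (h0 : 0 ≤ x) (hd : x ≤ 1/20000) :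
    XserR (XPl x) + 2*(XPl x)^7 ≤ XserL x - 2*x^7 := by
  unfold XserL XserR XPl
  have p6 := xpow_step h0 hd 6
  have p7 := xpow_step h0 hd 7
  have p8 := xpow_step h0 hd 8
  have p9 := xpow_step h0 hd 9
  have p10 := xpow_step h0 hd 10
  have p11 := xpow_step h0 hd 11
  have p12 := xpow_step h0 hd 12
  have p13 := xpow_step h0 hd 13
  have p14 := xpow_step h0 hd 14
  have p15 := xpow_step h0 hd 15
  have p16 := xpow_step h0 hd 16
  have p17 := xpow_step h0 hd 17
  have p18 := xpow_step h0 hd 18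
  have p19 := xpow_step h0 hd 19
  have p20 := xpow_step h0 hd 20
  have p21 := xpow_step h0 hd 21
  have p22 := xpow_step h0 hd 22
  have p23 := xpow_step h0 hd 23
  have p24 := xpow_step h0 hd 24
  have p25 := xpow_step h0 hd 25
  have p26 := xpow_step h0 hd 26
  have p27 := xpow_step h0 hd 27
  have p28 := xpow_step h0 hd 28
  have p29 := xpow_step h0 hd 29
  have p30 := xpow_step h0 hd 30
  have p31 := xpow_step h0 hd 31
  have p32 := xpow_step h0 hd 32
  have p33 := xpow_step h0 hd 33
  have p34 := xpow_step h0 hd 34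
  have n6 : (0:ℝ) ≤ x^6 := pow_nonneg h0 6
  have n7 : (0:ℝ) ≤ x^7 := pow_nonneg h0 7
  have n8 : (0:ℝ) ≤ x^8 := pow_nonneg h0 8
  have n9 : (0:ℝ) ≤ x^9 := pow_nonneg h0 9
  have n10 : (0:ℝ) ≤ x^10 := pow_nonneg h0 10
  have n11 : (0:ℝ) ≤ x^11 := pow_nonneg h0 11
  have n12 : (0:ℝ) ≤ x^12 := pow_nonneg h0 12
  have n13 : (0:ℝ) ≤ x^13 := pow_nonneg h0 13
  have n14 : (0:ℝ) ≤ x^14 := pow_nonneg h0 14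
  have n15 : (0:ℝ) ≤ x^15 := pow_nonneg h0 15
  have n16 : (0:ℝ) ≤ x^16 := pow_nonneg h0 16
  have n17 : (0:ℝ) ≤ x^17 := pow_nonneg h0 17
  have n18 : (0:ℝ) ≤ x^18 := pow_nonneg h0 18
  have n19 : (0:ℝ) ≤ x^19 := pow_nonneg h0 19
  have n20 : (0:ℝ) ≤ x^20 := pow_nonneg h0 20
  have n21 : (0:ℝ) ≤ x^21 := pow_nonneg h0 21
  have n22 : (0:ℝ) ≤ x^22 := pow_nonneg h0 22
  have n23 : (0:ℝ) ≤ x^23 := pow_nonneg h0 23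
  have n24 : (0:ℝ) ≤ x^24 := pow_nonneg h0 24
  have n25 : (0:ℝ) ≤ x^25 := pow_nonneg h0 25
  have n26 : (0:ℝ) ≤ x^26 := pow_nonneg h0 26
  have n27 : (0:ℝ) ≤ x^27 := pow_nonneg h0 27
  have n28 : (0:ℝ) ≤ x^28 := pow_nonneg h0 28
  have n29 : (0:ℝ) ≤ x^29 := pow_nonneg h0 29
  have n30 : (0:ℝ) ≤ x^30 := pow_nonneg h0 30
  have n31 : (0:ℝ) ≤ x^31 := pow_nonneg h0 31
  have n32 : (0:ℝ) ≤ x^32 := pow_nonneg h0 32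
  have n33 : (0:ℝ) ≤ x^33 := pow_nonneg h0 33
  have n34 : (0:ℝ) ≤ x^34 := pow_nonneg h0 34
  have n35 : (0:ℝ) ≤ x^35 := pow_nonneg h0 35
  norm_num at *
  linarith


lemma XRR_hasDerivAt {y : ℝ} (hy : -1 < y) : HasDerivAt XRR (1 - (1+y)⁻¹) y := by
  unfold XRR
  have h1 : HasDerivAt (fun y : ℝ => 1 + y) 1 y := by
    simpa using (hasDerivAt_id y).const_add 1
  have h2 : HasDerivAt (fun y : ℝ => Real.log (1 + y)) ((1+y)⁻¹ * 1) y :=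
    (Real.hasDerivAt_log (by linarith)).comp y h1
  simpa [Pi.sub_def] using (hasDerivAt_id y).sub h2

lemma XRR_strictMonoOn : StrictMonoOn XRR (Ici 0) := by
  apply strictMonoOn_of_deriv_pos (convex_Ici 0)
  · intro y hy
    exact (XRR_hasDerivAt (by simp at hy; linarith)).continuousAt.continuousWithinAt
  · intro y hy
    rw [interior_Ici] at hy
    have hy' : (0:ℝ) < y := hy
    rw [(XRR_hasDerivAt (by linarith)).deriv]
    have : (1+y)⁻¹ < 1 := by
      rw [inv_lt_one_iff₀]
      right; linarith
    linarith

def XP1 (s : ℝ) : ℝ := 1 + 2/3*s + 4/9*s^2 + 44/135*s^3 - s^4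
def XQ1 (s : ℝ) : ℝ := 1 + 2/3*s + 4/9*s^2 + 44/135*s^3 + s^4
def XpP (s : ℝ) : ℝ := 2/3 + 4/9*s + 44/135*s^2 - s^3
def XpQ (s : ℝ) : ℝ := 2/3 + 4/9*s + 44/135*s^2 + s^3
def XMP (s : ℝ) : ℝ := 8/135 + 35/9*s + 64/81*s^2 + 12992/18225*s^3 + 5716/18225*s^4
  - 250033/54675*s^5 + 196471/2460375*s^6 + 371114/2460375*s^7 + 224/6075*s^8 + 89/45*s^9 - s^10
def XMQ (s : ℝ) : ℝ := 8/135 - 19/9*s + 64/81*s^2 + 12992/18225*s^3 + 15436/18225*s^4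
  - 49153/54675*s^5 + 5250871/2460375*s^6 + 3079754/2460375*s^7 + 4096/6075*s^8 - 1/45*s^9 + s^10

lemma XP1_pos {s : ℝ} (h0 : 0 < s) (h1 : s < 1/2) : 0 < XP1 s := by
  unfold XP1; nlinarith [pow_pos h0 3, pow_pos h0 2, pow_pos h0 4]

lemma XQ1_pos {s : ℝ} (h0 : 0 < s) (h1 : s < 1/2) : 0 < XQ1 s := by
  unfold XQ1; nlinarith [pow_pos h0 3, pow_pos h0 2, pow_pos h0 4]

lemma XPl_eq (s : ℝ) : XPl s = s * XP1 s := by unfold XPl XP1; ring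
lemma XQu_eq (s : ℝ) : XQu s = s * XQ1 s := by unfold XQu XQ1; ring

lemma Xmem : Ioo (0:ℝ) (1/2) ∈ 𝓝[>] (0:ℝ) :=
  Ioo_mem_nhdsGT_of_mem (by norm_num)

lemma XlimL : Tendsto (fun s => 1/s - 1/(XPl s)) (𝓝[>] (0:ℝ)) (𝓝 (2/3)) := by
  have key : Tendsto (fun s => XpP s / XP1 s) (𝓝 (0:ℝ)) (𝓝 (2/3)) := by
    have hc : ContinuousAt (fun s => XpP s / XP1 s) 0 := by
      apply ContinuousAt.div
      · unfold XpP; fun_prop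
      · unfold XP1; fun_prop
      · unfold XP1; norm_num
    have := hc.tendsto
    simpa [XpP, XP1] using this
  apply (key.mono_left nhdsWithin_le_nhds).congr'
  filter_upwards [Xmem] with s hs
  obtain ⟨h0, h1⟩ := hs
  have hp1 := XP1_pos h0 h1
  rw [XPl_eq]
  have hs0 : s ≠ 0 := ne_of_gt h0
  have hp0 : XP1 s ≠ 0 := ne_of_gt hp1
  field_simp
  unfold XpP XP1
  ring

lemma XlimU : Tendsto (fun s => 1/s - 1/(XQu s)) (𝓝[>] (0:ℝ)) (𝓝 (2/3)) := by
  have key : Tendsto (fun s => XpQ s / XQ1 s) (𝓝 (0:ℝ)) (𝓝 (2/3)) := by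
    have hc : ContinuousAt (fun s => XpQ s / XQ1 s) 0 := by
      apply ContinuousAt.div
      · unfold XpQ; fun_prop
      · unfold XQ1; fun_prop
      · unfold XQ1; norm_num
    have := hc.tendsto
    simpa [XpQ, XQ1] using this
  apply (key.mono_left nhdsWithin_le_nhds).congr'
  filter_upwards [Xmem] with s hs
  obtain ⟨h0, h1⟩ := hs
  have hp1 := XQ1_pos h0 h1
  rw [XQu_eq]
  have hs0 : s ≠ 0 := ne_of_gt h0
  have hp0 : XQ1 s ≠ 0 := ne_of_gt hp1
  field_simp
  unfold XpQ XQ1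
  ring

lemma XlimDP : Tendsto (fun s => (1 + XPl s)/(XPl s)^3 - (1-s)/s^3) (𝓝[>] (0:ℝ))
    (𝓝 (8/135)) := by
  have key : Tendsto (fun s => XMP s / (XP1 s)^3) (𝓝 (0:ℝ)) (𝓝 (8/135)) := by
    have hc : ContinuousAt (fun s => XMP s / (XP1 s)^3) 0 := by
      apply ContinuousAt.div
      · unfold XMP; fun_prop
      · unfold XP1; fun_prop
      · unfold XP1; norm_num
    have := hc.tendsto
    simpa [XMP, XP1] using this
  apply (key.mono_left nhdsWithin_le_nhds).congr'
  filter_upwards [Xmem] with s hs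
  obtain ⟨h0, h1⟩ := hs
  have hp1 := XP1_pos h0 h1
  rw [XPl_eq]
  have hs0 : s ≠ 0 := ne_of_gt h0
  have hp0 : XP1 s ≠ 0 := ne_of_gt hp1
  field_simp
  unfold XMP XP1
  ring

lemma XlimDQ : Tendsto (fun s => (1 + XQu s)/(XQu s)^3 - (1-s)/s^3) (𝓝[>] (0:ℝ))
    (𝓝 (8/135)) := by
  have key : Tendsto (fun s => XMQ s / (XQ1 s)^3) (𝓝 (0:ℝ)) (𝓝 (8/135)) := by
    have hc : ContinuousAt (fun s => XMQ s / (XQ1 s)^3) 0 := by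
      apply ContinuousAt.div
      · unfold XMQ; fun_prop
      · unfold XQ1; fun_prop
      · unfold XQ1; norm_num
    have := hc.tendsto
    simpa [XMQ, XQ1] using this
  apply (key.mono_left nhdsWithin_le_nhds).congr'
  filter_upwards [Xmem] with s hs
  obtain ⟨h0, h1⟩ := hs
  have hp1 := XQ1_pos h0 h1
  rw [XQu_eq]
  have hs0 : s ≠ 0 := ne_of_gt h0
  have hp0 : XQ1 s ≠ 0 := ne_of_gt hp1
  field_simp
  unfold XMQ XQ1
  ring

end XiAuxSection

set_option maxHeartbeats 1000000

/-- `lim_{t→1+} ξ(t) = 2/3` and `lim_{t→1+} ξ'(t) = 8/135`, where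
`u t ≤ 0 ≤ v t` are the two solutions of `e^{-s} + s = t` for `t ≥ 1`,
`ξ(t) = 1/(1 − e^{-v t}) + 1/(1 − e^{-u t})` for `t > 1`, and `ξ'` is the derivative of
`ξ` on `(1,∞)`. -/
theorem xi_limits_at_one (u v ξ ξ' : ℝ → ℝ)
    (hu : ∀ t ≥ (1:ℝ), u t ≤ 0 ∧ Real.exp (-(u t)) + u t = t)
    (hv : ∀ t ≥ (1:ℝ), 0 ≤ v t ∧ Real.exp (-(v t)) + v t = t)
    (hξ : ∀ t > (1:ℝ),
      ξ t = 1/(1 - Real.exp (-(v t))) + 1/(1 - Real.exp (-(u t))))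
    (hξ' : ∀ t > (1:ℝ), HasDerivAt ξ (ξ' t) t) :
    Tendsto ξ (nhdsWithin 1 (Set.Ioi 1)) (nhds (2/3)) ∧
      Tendsto ξ' (nhdsWithin 1 (Set.Ioi 1)) (nhds (8/135)) := by
  have hv_eq : ∀ t, 1 ≤ t → XiF (v t) = t := fun t ht => (hv t ht).2
  have hu_eq : ∀ t, 1 ≤ t → XiF (u t) = t := fun t ht => (hu t ht).2
  have hv_pos : ∀ t, 1 < t → 0 < v t := by
    intro t ht
    rcases lt_or_eq_of_le (hv t ht.le).1 with h | h
    · exact h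
    · exfalso
      have h2 := (hv t ht.le).2
      rw [← h] at h2
      simp at h2
      linarith
  have hu_neg : ∀ t, 1 < t → u t < 0 := by
    intro t ht
    rcases lt_or_eq_of_le (hu t ht.le).1 with h | h
    · exact h
    · exfalso
      have h2 := (hu t ht.le).2
      rw [h] at h2
      simp at h2
      linarith
  have hvm : ∀ a b : ℝ, 1 ≤ a → a ≤ b → v a ≤ v b := by
    intro a b ha hab
    by_contra h
    push_neg at h
    have h2 := XiF_strictMonoOn (mem_Ici.2 (hv b (ha.trans hab)).1) (mem_Ici.2 (hv a ha).1) h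
    rw [hv_eq a ha, hv_eq b (ha.trans hab)] at h2
    linarith
  have hum : ∀ a b : ℝ, 1 ≤ a → a ≤ b → u b ≤ u a := by
    intro a b ha hab
    by_contra h
    push_neg at h
    have h2 := XiF_strictAntiOn (mem_Iic.2 (hu a ha).1) (mem_Iic.2 (hu b (ha.trans hab)).1) h
    rw [hu_eq a ha, hu_eq b (ha.trans hab)] at h2
    linarith
  have hv0 : Tendsto v (𝓝[>] (1:ℝ)) (𝓝 0) := by
    refine tendsto_order.2 ⟨?_, ?_⟩
    · intro a ha
      filter_upwards [self_mem_nhdsWithin] with t ht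
      exact lt_of_lt_of_le ha (hv t (le_of_lt ht)).1
    · intro a ha
      have hfa : 1 < XiF a := by
        have h2 := Real.add_one_lt_exp (x := -a) (by intro h; rw [neg_eq_zero] at h; exact absurd h (ne_of_gt ha))
        unfold XiF
        linarith
      filter_upwards [Ioo_mem_nhdsGT_of_mem
        (show (1:ℝ) ∈ Ico (1:ℝ) (XiF a) from ⟨le_refl _, hfa⟩)] with t ht
      by_contra h
      push_neg at h
      have hle : XiF a ≤ XiF (v t) :=
        XiF_strictMonoOn.monotoneOn (mem_Ici.2 ha.le) (mem_Ici.2 (hv t ht.1.le).1) h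
      rw [hv_eq t ht.1.le] at hle
      exact absurd ht.2 (not_lt.2 hle)
  obtain ⟨X, hXdef⟩ : ∃ X : ℝ → ℝ, X = fun t => 1 - Real.exp (-(v t)) := ⟨_, rfl⟩
  obtain ⟨Y, hYdef⟩ : ∃ Y : ℝ → ℝ, Y = fun t => Real.exp (-(u t)) - 1 := ⟨_, rfl⟩
  have hXt : ∀ s, X s = 1 - Real.exp (-(v s)) := fun s => by rw [hXdef]
  have hYt : ∀ s, Y s = Real.exp (-(u s)) - 1 := fun s => by rw [hYdef]
  have hXpos : ∀ t, 1 < t → 0 < X t := by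
    intro t ht
    have h2 : Real.exp (-(v t)) < 1 := by
      rw [Real.exp_lt_one_iff]
      have := hv_pos t ht; linarith
    rw [hXt t]; linarith
  have hXlt : ∀ t, 1 < t → X t < 1 := by
    intro t ht
    have := Real.exp_pos (-(v t))
    rw [hXt t]; linarith
  have hYpos : ∀ t, 1 < t → 0 < Y t := by
    intro t ht
    have h2 : 1 < Real.exp (-(u t)) := by
      rw [Real.one_lt_exp_iff]
      have := hu_neg t ht; linarith
    rw [hYt t]; linarith
  have hLX : ∀ t, 1 < t → XLL (X t) = t - 1 := by
    intro t ht
    unfold XLL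
    have e1 : (1:ℝ) - X t = Real.exp (-(v t)) := by rw [hXt t]; ring
    rw [e1, Real.log_exp]
    have := (hv t ht.le).2
    rw [hXt t]
    linarith
  have hRY : ∀ t, 1 < t → XRR (Y t) = t - 1 := by
    intro t ht
    unfold XRR
    have e1 : (1:ℝ) + Y t = Real.exp (-(u t)) := by rw [hYt t]; ring
    rw [e1, Real.log_exp]
    have := (hu t ht.le).2
    rw [hYt t]
    linarith
  have hX0 : Tendsto X (𝓝[>] (1:ℝ)) (𝓝[>] (0:ℝ)) := by
    rw [tendsto_nhdsWithin_iff]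
    constructor
    · apply tendsto_of_tendsto_of_tendsto_of_le_of_le' tendsto_const_nhds hv0
      · filter_upwards [self_mem_nhdsWithin] with t ht
        exact (hXpos t ht).le
      · filter_upwards [self_mem_nhdsWithin] with t ht
        have := Real.add_one_le_exp (-(v t))
        rw [hXt t]
        linarith
    · filter_upwards [self_mem_nhdsWithin] with t ht
      exact hXpos t ht
  have hPQ : ∀ t, 1 < t → X t ≤ 1/20000 → XPl (X t) ≤ Y t ∧ Y t ≤ XQu (X t) := by
    intro t ht hδ
    have hx0 : 0 < X t := hXpos t ht
    have hx2 : X t ≤ 1/2 := by linarith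
    have hle1 : X t ≤ 1 := (hXlt t ht).le
    have q2 := pow_le_pow_of_le_one hx0.le hle1 (show 1 ≤ 2 by norm_num)
    have q3 := pow_le_pow_of_le_one hx0.le hle1 (show 1 ≤ 3 by norm_num)
    have q4 := pow_le_pow_of_le_one hx0.le hle1 (show 1 ≤ 4 by norm_num)
    have q5 := pow_le_pow_of_le_one hx0.le hle1 (show 1 ≤ 5 by norm_num)
    have r2 := pow_nonneg hx0.le 2
    have r3 := pow_nonneg hx0.le 3
    have r4 := pow_nonneg hx0.le 4
    have r5 := pow_nonneg hx0.le 5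
    rw [pow_one] at q2 q3 q4 q5
    have hQ1 : 0 ≤ XQu (X t) := by unfold XQu; linarith
    have hQ2 : XQu (X t) ≤ 1/2 := by unfold XQu; linarith
    have hP1 : 0 ≤ XPl (X t) := by unfold XPl; linarith
    have hP2 : XPl (X t) ≤ 1/2 := by unfold XPl; linarith
    have hLb := XLL_bound hx0.le hx2
    have hRQ := XRR_bound hQ1 hQ2
    have hRP := XRR_bound hP1 hP2
    have hkQ := keyQ hx0.le hδ
    have hkP := keyP hx0.le hδ
    rw [abs_le] at hLb hRQ hRP
    have e1 : XRR (Y t) = XLL (X t) := by rw [hRY t ht, hLX t ht]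
    constructor
    · by_contra h
      push_neg at h
      have h2 := XRR_strictMonoOn (mem_Ici.2 (hYpos t ht).le) (mem_Ici.2 hP1) h
      linarith [hRP.2, hLb.1]
    · by_contra h
      push_neg at h
      have h2 := XRR_strictMonoOn (mem_Ici.2 hQ1) (mem_Ici.2 (hYpos t ht).le) h
      linarith [hRQ.1, hLb.2]
  have hev : ∀ᶠ t in 𝓝[>] (1:ℝ), 1 < t ∧ 0 < X t ∧ X t ≤ 1/20000 := by
    have h1 : ∀ᶠ t in 𝓝[>] (1:ℝ), X t ∈ Ioo (0:ℝ) (1/20000) :=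
      hX0 (Ioo_mem_nhdsGT_of_mem (by norm_num))
    filter_upwards [h1, self_mem_nhdsWithin] with t h2 h3
    exact ⟨h3, h2.1, h2.2.le⟩
  have hPpos : ∀ t, 1 < t → X t ≤ 1/20000 → 0 < XPl (X t) := by
    intro t ht hδ
    rw [XPl_eq]
    exact mul_pos (hXpos t ht) (XP1_pos (hXpos t ht) (by linarith))
  have hξform : ∀ t, 1 < t → ξ t = 1/(X t) - 1/(Y t) := by
    intro t ht
    rw [hξ t ht]
    have h1 : (1:ℝ) - Real.exp (-(u t)) = -(Y t) := by rw [hYt t]; ring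
    rw [h1, hXt t, div_neg]
    ring
  -- first limit
  have hlim1 : Tendsto ξ (𝓝[>] (1:ℝ)) (𝓝 (2/3)) := by
    apply tendsto_of_tendsto_of_tendsto_of_le_of_le'
      ((XlimL.comp hX0)) ((XlimU.comp hX0))
    · filter_upwards [hev] with t hh
      obtain ⟨ht, hx0, hδ⟩ := hh
      obtain ⟨hP, hQ⟩ := hPQ t ht hδ
      have hPp := hPpos t ht hδ
      have hYp := hYpos t ht
      rw [hξform t ht]
      simp only [Function.comp_apply]
      have : 1/(Y t) ≤ 1/(XPl (X t)) := one_div_le_one_div_of_le hPp hP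
      linarith
    · filter_upwards [hev] with t hh
      obtain ⟨ht, hx0, hδ⟩ := hh
      obtain ⟨hP, hQ⟩ := hPQ t ht hδ
      have hYp := hYpos t ht
      rw [hξform t ht]
      simp only [Function.comp_apply]
      have : 1/(XQu (X t)) ≤ 1/(Y t) := one_div_le_one_div_of_le hYp hQ
      linarith
  refine ⟨hlim1, ?_⟩
  have hderiv : ∀ t, 1 < t → ξ' t = (1 + Y t)/(Y t)^3 - (1 - X t)/(X t)^3 := by
    intro t ht
    obtain ⟨t₁, ht1e⟩ : ∃ t₁ : ℝ, t₁ = (1+t)/2 := ⟨_, rfl⟩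
    have ht1 : (1:ℝ) < t₁ := by rw [ht1e]; linarith
    have ht1' : t₁ < t := by rw [ht1e]; linarith
    -- continuity of v at t
    have hvcont : ContinuousAt v t := by
      have hcpos : 0 < 1 - Real.exp (-(v t₁)) := by
        have h2 : Real.exp (-(v t₁)) < 1 := by
          rw [Real.exp_lt_one_iff]
          have := hv_pos _ ht1; linarith
        linarith
      have key : ∀ p q : ℝ, t₁ ≤ p → p ≤ q →
          (1 - Real.exp (-(v t₁))) * (v q - v p) ≤ q - p := by
        intro p q hp hpq
        have h1p : (1:ℝ) ≤ p := by linarith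
        have hvp : v t₁ ≤ v p := hvm _ _ ht1.le hp
        have hvq : v p ≤ v q := hvm _ _ h1p hpq
        have e1 : q - p = (v q - v p) - (Real.exp (-(v p)) - Real.exp (-(v q))) := by
          have a1 := hv_eq p h1p
          have a2 := hv_eq q (by linarith)
          unfold XiF at a1 a2
          linarith
        have e2 : Real.exp (-(v p)) - Real.exp (-(v q)) ≤ Real.exp (-(v p)) * (v q - v p) := by
          have h3 : Real.exp (-(v q)) = Real.exp (-(v p)) * Real.exp (-(v q - v p)) := by
            rw [← Real.exp_add]; ring_nf
          rw [h3]
          have h4 := Real.add_one_le_exp (-(v q - v p))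
          nlinarith [Real.exp_pos (-(v p))]
        have e3 : Real.exp (-(v p)) ≤ Real.exp (-(v t₁)) :=
          Real.exp_le_exp.2 (by linarith)
        nlinarith [mul_le_mul_of_nonneg_right e3 (sub_nonneg.2 hvq)]
      have hlip : LipschitzOnWith (Real.toNNReal ((1 - Real.exp (-(v t₁)))⁻¹)) v (Ici t₁) := by
        apply LipschitzOnWith.of_dist_le_mul
        intro a ha b hb
        rw [Real.dist_eq, Real.dist_eq, Real.coe_toNNReal _ (by positivity)]
        rcases le_total a b with hab | hab
        · have h1 := key a b (mem_Ici.1 ha) hab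
          have h2 : v a ≤ v b := hvm a b (by have := mem_Ici.1 ha; linarith) hab
          rw [abs_of_nonpos (by linarith), abs_of_nonpos (by linarith), neg_sub, neg_sub,
            inv_mul_eq_div, le_div_iff₀ hcpos]
          nlinarith
        · have h1 := key b a (mem_Ici.1 hb) hab
          have h2 : v b ≤ v a := hvm b a (by have := mem_Ici.1 hb; linarith) hab
          rw [abs_of_nonneg (by linarith), abs_of_nonneg (by linarith),
            inv_mul_eq_div, le_div_iff₀ hcpos]
          nlinarith
      have hcw : ContinuousWithinAt v (Ici t₁) t :=
        hlip.continuousOn.continuousWithinAt (mem_Ici.2 ht1'.le)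
      exact hcw.continuousAt (Ici_mem_nhds ht1')
    -- continuity of u at t
    have hucont : ContinuousAt u t := by
      have hcpos : 0 < Real.exp (-(u t₁)) - 1 := by
        have h2 : 1 < Real.exp (-(u t₁)) := by
          rw [Real.one_lt_exp_iff]
          have := hu_neg _ ht1; linarith
        linarith
      have key : ∀ p q : ℝ, t₁ ≤ p → p ≤ q →
          (Real.exp (-(u t₁)) - 1) * (u p - u q) ≤ q - p := by
        intro p q hp hpq
        have h1p : (1:ℝ) ≤ p := by linarith
        have hup : u p ≤ u t₁ := hum _ _ ht1.le hp
        have huq : u q ≤ u p := hum _ _ h1p hpq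
        have e1 : q - p = (Real.exp (-(u q)) - Real.exp (-(u p))) + (u q - u p) := by
          have a1 := hu_eq p h1p
          have a2 := hu_eq q (by linarith)
          unfold XiF at a1 a2
          linarith
        have e2 : Real.exp (-(u p)) * (u p - u q) ≤ Real.exp (-(u q)) - Real.exp (-(u p)) := by
          have h3 : Real.exp (-(u q)) = Real.exp (-(u p)) * Real.exp (u p - u q) := by
            rw [← Real.exp_add]; ring_nf
          rw [h3]
          have h4 := Real.add_one_le_exp (u p - u q)
          nlinarith [Real.exp_pos (-(u p))]
        have e3 : Real.exp (-(u t₁)) ≤ Real.exp (-(u p)) :=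
          Real.exp_le_exp.2 (by linarith)
        nlinarith [mul_le_mul_of_nonneg_right e3 (sub_nonneg.2 huq)]
      have hlip : LipschitzOnWith (Real.toNNReal ((Real.exp (-(u t₁)) - 1)⁻¹)) u (Ici t₁) := by
        apply LipschitzOnWith.of_dist_le_mul
        intro a ha b hb
        rw [Real.dist_eq, Real.dist_eq, Real.coe_toNNReal _ (by positivity)]
        rcases le_total a b with hab | hab
        · have h1 := key a b (mem_Ici.1 ha) hab
          have h2 : u b ≤ u a := hum a b (by have := mem_Ici.1 ha; linarith) hab
          rw [abs_of_nonneg (by linarith), abs_of_nonpos (by linarith), neg_sub,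
            inv_mul_eq_div, le_div_iff₀ hcpos]
          nlinarith
        · have h1 := key b a (mem_Ici.1 hb) hab
          have h2 : u a ≤ u b := hum b a (by have := mem_Ici.1 hb; linarith) hab
          rw [abs_of_nonpos (by linarith), abs_of_nonneg (by linarith), neg_sub,
            inv_mul_eq_div, le_div_iff₀ hcpos]
          nlinarith
      have hcw : ContinuousWithinAt u (Ici t₁) t :=
        hlip.continuousOn.continuousWithinAt (mem_Ici.2 ht1'.le)
      exact hcw.continuousAt (Ici_mem_nhds ht1')
    -- derivatives of u and v
    have hXp : 0 < 1 - Real.exp (-(v t)) := by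
      have := hXpos t ht; rw [hXt t] at this; linarith
    have hXne : (1:ℝ) - Real.exp (-(v t)) ≠ 0 := ne_of_gt hXp
    have hYn : 1 - Real.exp (-(u t)) < 0 := by
      have := hYpos t ht; rw [hYt t] at this; linarith
    have hYne : (1:ℝ) - Real.exp (-(u t)) ≠ 0 := ne_of_lt hYn
    have hvd : HasDerivAt v (1 - Real.exp (-(v t)))⁻¹ t := by
      apply HasDerivAt.of_local_left_inverse hvcont (XiF_hasDerivAt (v t)) hXne
      filter_upwards [Ioi_mem_nhds ht] with y hy
      exact hv_eq y (le_of_lt hy)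
    have hud : HasDerivAt u (1 - Real.exp (-(u t)))⁻¹ t := by
      apply HasDerivAt.of_local_left_inverse hucont (XiF_hasDerivAt (u t)) hYne
      filter_upwards [Ioi_mem_nhds ht] with y hy
      exact hu_eq y (le_of_lt hy)
    -- derivative of the explicit formula
    have hev1 : HasDerivAt (fun s => Real.exp (-(v s)))
        (Real.exp (-(v t)) * -((1 - Real.exp (-(v t)))⁻¹)) t :=
      by have := (Real.hasDerivAt_exp (-(v t))).comp t hvd.fun_neg; exact this
    have hev2 : HasDerivAt (fun s => Real.exp (-(u s)))
        (Real.exp (-(u t)) * -((1 - Real.exp (-(u t)))⁻¹)) t :=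
      by have := (Real.hasDerivAt_exp (-(u t))).comp t hud.fun_neg; exact this
    have hone1 : HasDerivAt (fun s => 1 - Real.exp (-(v s)))
        (-(Real.exp (-(v t)) * -((1 - Real.exp (-(v t)))⁻¹))) t := hev1.const_sub 1
    have hone2 : HasDerivAt (fun s => 1 - Real.exp (-(u s)))
        (-(Real.exp (-(u t)) * -((1 - Real.exp (-(u t)))⁻¹))) t := hev2.const_sub 1
    have hinv1 : HasDerivAt (fun s => (1 - Real.exp (-(v s)))⁻¹)
        (-(-(Real.exp (-(v t)) * -((1 - Real.exp (-(v t)))⁻¹))) / (1 - Real.exp (-(v t)))^2) t :=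
      hone1.inv hXne
    have hinv2 : HasDerivAt (fun s => (1 - Real.exp (-(u s)))⁻¹)
        (-(-(Real.exp (-(u t)) * -((1 - Real.exp (-(u t)))⁻¹))) / (1 - Real.exp (-(u t)))^2) t :=
      hone2.inv hYne
    have hsum := hinv1.add hinv2
    have hform : HasDerivAt (fun s => 1/(1 - Real.exp (-(v s))) + 1/(1 - Real.exp (-(u s))))
        ((1 + Y t)/(Y t)^3 - (1 - X t)/(X t)^3) t := by
      have heq : (1 + Y t)/(Y t)^3 - (1 - X t)/(X t)^3 =
          -(-(Real.exp (-(v t)) * -((1 - Real.exp (-(v t)))⁻¹))) / (1 - Real.exp (-(v t)))^2 +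
          -(-(Real.exp (-(u t)) * -((1 - Real.exp (-(u t)))⁻¹))) / (1 - Real.exp (-(u t)))^2 := by
        rw [hXt t, hYt t]
        have hb' : Real.exp (-(u t)) - 1 ≠ 0 := fun h => hYne (by linarith)
        field_simp
        ring
      rw [heq]
      simpa [one_div, Pi.add_def] using hsum
    have hxi2 : HasDerivAt ξ ((1 + Y t)/(Y t)^3 - (1 - X t)/(X t)^3) t := by
      apply hform.congr_of_eventuallyEq
      filter_upwards [Ioi_mem_nhds ht] with y hy
      exact hξ y hy
    exact (hξ' t ht).unique hxi2
  -- monotone in y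
  have hmono : ∀ y1 y2 : ℝ, 0 < y1 → y1 ≤ y2 → (1+y2)/y2^3 ≤ (1+y1)/y1^3 := by
    intro y1 y2 h1 h12
    have h2 : 0 < y2 := lt_of_lt_of_le h1 h12
    rw [div_le_div_iff₀ (by positivity) (by positivity)]
    nlinarith [pow_le_pow_left₀ h1.le h12 2, pow_le_pow_left₀ h1.le h12 3,
      mul_pos h1 h2, mul_le_mul_of_nonneg_left (pow_le_pow_left₀ h1.le h12 2) (mul_pos h1 h2).le]
  -- squeeze for the second limit
  apply tendsto_of_tendsto_of_tendsto_of_le_of_le'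
    ((XlimDQ.comp hX0)) ((XlimDP.comp hX0))
  · filter_upwards [hev] with t hh
    obtain ⟨ht, hx0, hδ⟩ := hh
    obtain ⟨hP, hQ⟩ := hPQ t ht hδ
    have hPp := hPpos t ht hδ
    have hYp := hYpos t ht
    rw [hderiv t ht]
    simp only [Function.comp_apply]
    have := hmono (Y t) (XQu (X t)) hYp hQ
    linarith
  · filter_upwards [hev] with t hh
    obtain ⟨ht, hx0, hδ⟩ := hh
    obtain ⟨hP, hQ⟩ := hPQ t ht hδ
    have hPp := hPpos t ht hδ
    have hYp := hYpos t ht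
    rw [hderiv t ht]
    simp only [Function.comp_apply]
    have := hmono (XPl (X t)) (Y t) hPp hP
    linarith
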